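/- arXiv:0709.1436 — 2 statements merged into one kernel-verified Lean document; each statement's English description precedes it below -/
import Mathlib

section
/- Let n ≥ 1. For a ∈ ℂⁿ with √(1−2/e) ≤ |a| < 1, define h_a(z) = (log(2/(1−|a|²)))^{−1}·(⟨z,a⟩ − 1)·[(1 + log(2/(1 − ⟨z,a⟩)))² + 1] for z in the open unit ball B, where log is the principal branch (Re(1 − ⟨z,a⟩) > 0). Then sup over all such a of the Zygmund norm ‖h_a‖ is finite; that is, there exists M < ∞ such that ‖h_a‖ ≤ M for every a with √(1−2/e) ≤ |a| < 1. -/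
open MeasureTheory Metric Filter

noncomputable section

/-- `E n` is `ℂⁿ` with the Euclidean structure. -/
abbrev E (n : ℕ) := EuclideanSpace ℂ (Fin n)

/-- The open unit ball of `ℂⁿ`. -/
def uball (n : ℕ) : Set (E n) := Metric.ball 0 1

/-- The radial derivative `Rf(z) = ∑ z_j ∂f/∂z_j(z)`. -/
def rad (n : ℕ) (f : E n → ℂ) (z : E n) : ℂ :=
  ∑ j : Fin n, z j * fderiv ℂ f z (EuclideanSpace.single j 1)

/-- The set of values `(1-|z|²)|R(Rf)(z)|`, `z ∈ B`. -/
def zygSet (n : ℕ) (f : E n → ℂ) : Set ℝ :=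
  {x | ∃ z ∈ uball n, x = (1 - ‖z‖ ^ 2) * ‖rad n (rad n f) z‖}

/-- Membership in the Zygmund space: `sup_{z∈B} (1-|z|²)|R(Rf)(z)| < ∞`. -/
def memZ (n : ℕ) (f : E n → ℂ) : Prop := BddAbove (zygSet n f)

/-- The Zygmund norm `‖f‖ = |f(0)| + sup_{z∈B} (1-|z|²)|R(Rf)(z)|`. -/
def zygNorm (n : ℕ) (f : E n → ℂ) : ℝ :=
  ‖f 0‖ + sSup (zygSet n f)

/-- The extended Cesàro operator `T_g f(z) = ∫₀¹ f(tz) Rg(tz) dt/t`. -/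
def Tg (n : ℕ) (g f : E n → ℂ) (z : E n) : ℂ :=
  ∫ t in (0:ℝ)..1, f (t • z) * rad n g (t • z) / (t : ℂ)

/-- The operator `I_g f(z) = ∫₀¹ Rf(tz) g(tz) dt/t`. -/
def Ig (n : ℕ) (g f : E n → ℂ) (z : E n) : ℂ :=
  ∫ t in (0:ℝ)..1, rad n f (t • z) * g (t • z) / (t : ℂ)

/-- The Hermitian pairing `⟨z,w⟩ = ∑ z_j conj(w_j)`. -/
def hip (n : ℕ) (z w : E n) : ℂ := ∑ j : Fin n, z j * (starRingEnd ℂ) (w j)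

/-- The test function
`h_a(z) = (log(2/(1-|a|²)))⁻¹ (⟨z,a⟩-1) [(1+log(2/(1-⟨z,a⟩)))² + 1]`. -/
def ha (n : ℕ) (a : E n) (z : E n) : ℂ :=
  ((Real.log (2 / (1 - ‖a‖ ^ 2)) : ℂ))⁻¹ * (hip n z a - 1) *
    ((1 + Complex.log (2 / (1 - hip n z a))) ^ 2 + 1)


/-! ### Auxiliary lemmas -/

lemma slit_aux {w : ℂ} (hw : 0 < (1 - w).re) : 2 / (1 - w) ∈ Complex.slitPlane := by
  have h1 : (1 : ℂ) - w ≠ 0 := fun h => by simp [h] at hw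
  left
  rw [div_eq_mul_inv]
  simp only [Complex.mul_re, Complex.inv_re, Complex.inv_im]
  simp only [Complex.re_ofNat, Complex.im_ofNat]
  have h2 := Complex.normSq_pos.2 h1
  have : 0 < (1 - w).re / Complex.normSq (1 - w) := div_pos hw h2
  nlinarith [this]

lemma hasDerivAt_L {w : ℂ} (hw : 0 < (1 - w).re) :
    HasDerivAt (fun w : ℂ => Complex.log (2 / (1 - w))) (1 / (1 - w)) w := by
  have h1 : (1 : ℂ) - w ≠ 0 := fun h => by simp [h] at hw
  have h0 : HasDerivAt (fun w : ℂ => 1 - w) (-1) w := (hasDerivAt_id w).const_sub 1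
  have hinv : HasDerivAt (fun w : ℂ => 2 / (1 - w)) (2 * (-(-1) / (1 - w) ^ 2)) w := by
    simpa [div_eq_mul_inv] using (h0.inv h1).const_mul (2:ℂ)
  have := hinv.clog (slit_aux hw)
  convert this using 1
  field_simp

lemma hasDerivAt_G (c : ℝ) {w : ℂ} (hw : 0 < (1 - w).re) :
    HasDerivAt (fun y : ℂ => ((c : ℂ))⁻¹ * ((y - 1) * ((1 + Complex.log (2 / (1 - y))) ^ 2 + 1)))
      ((c : ℂ)⁻¹ * (Complex.log (2 / (1 - w))) ^ 2) w := by
  have h1 : (1 : ℂ) - w ≠ 0 := fun h => by simp [h] at hw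
  set L := Complex.log (2 / (1 - w)) with hL
  have hq : HasDerivAt (fun w : ℂ => (1 + Complex.log (2 / (1 - w))) ^ 2 + 1)
      ((2 : ℕ) * (1 + L) ^ 1 * (1 / (1 - w))) w :=
    (((hasDerivAt_L hw).const_add 1).pow 2).add_const 1
  have hm := (((hasDerivAt_id w).sub_const 1).mul hq).const_mul ((c : ℂ))⁻¹
  convert hm using 1
  · rfl
  case e'_8 => rfl
  congr 1
  push_cast
  simp only [id, ← hL]
  field_simp
  ring

lemma hasDerivAt_H (c : ℝ) {w : ℂ} (hw : 0 < (1 - w).re) :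
    HasDerivAt (fun y : ℂ => ((c : ℂ))⁻¹ * (y * (Complex.log (2 / (1 - y))) ^ 2))
      ((c : ℂ)⁻¹ * ((Complex.log (2 / (1 - w))) ^ 2
        + w * (2 * Complex.log (2 / (1 - w)) / (1 - w)))) w := by
  have h1 : (1 : ℂ) - w ≠ 0 := fun h => by simp [h] at hw
  set L := Complex.log (2 / (1 - w)) with hL
  have hq : HasDerivAt (fun w : ℂ => (Complex.log (2 / (1 - w))) ^ 2)
      ((2 : ℕ) * L ^ 1 * (1 / (1 - w))) w := (hasDerivAt_L hw).pow 2
  have hm := ((hasDerivAt_id w).mul hq).const_mul ((c : ℂ))⁻¹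
  convert hm using 1
  · rfl
  case e'_8 => rfl
  congr 1
  push_cast
  simp only [id, ← hL]
  field_simp

lemma hip_innerSL (n : ℕ) (a z : E n) : hip n z a = innerSL ℂ a z := by
  simp [hip, PiLp.inner_apply, RCLike.inner_apply, mul_comm]

lemma sum_single (n : ℕ) (z : E n) (D : E n →L[ℂ] ℂ) :
    ∑ j, z j * D (EuclideanSpace.single j 1) = D z := by
  have hz : z = ∑ j, z j • EuclideanSpace.single j (1:ℂ) := by
    ext i
    rw [WithLp.ofLp_sum, Finset.sum_apply]
    simp [EuclideanSpace.single_apply, Finset.sum_ite_eq']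
  conv_rhs => rw [hz]
  simp [map_sum, smul_eq_mul]

lemma rad_congr {n : ℕ} {f g : E n → ℂ} {z : E n} (h : f =ᶠ[nhds z] g) :
    rad n f z = rad n g z := by
  unfold rad; rw [h.fderiv_eq]

lemma rad_comp (n : ℕ) (a : E n) {G : ℂ → ℂ} {G' : ℂ} {z : E n}
    (h : HasDerivAt G G' (hip n z a)) :
    rad n (fun z => G (hip n z a)) z = hip n z a * G' := by
  have h' : HasDerivAt G G' ((innerSL ℂ a) z) := by rwa [← hip_innerSL]
  have h2 : HasFDerivAt (fun z : E n => G (hip n z a))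
      (G' • (innerSL ℂ a : E n →L[ℂ] ℂ)) z := by
    have h3 := h'.comp_hasFDerivAt z ((innerSL ℂ a).hasFDerivAt)
    exact h3.congr_of_eventuallyEq
      (Filter.Eventually.of_forall fun y => by simp [Function.comp, hip_innerSL])
  rw [rad, h2.fderiv]
  simp only [ContinuousLinearMap.smul_apply, smul_eq_mul]
  calc ∑ j, z j * (G' * (innerSL ℂ a) (EuclideanSpace.single j 1))
      = G' * ∑ j, z j * (innerSL ℂ a) (EuclideanSpace.single j 1) := by
        rw [Finset.mul_sum]; exact Finset.sum_congr rfl fun j _ => by ring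
    _ = G' * (innerSL ℂ a) z := by rw [sum_single]
    _ = hip n z a * G' := by rw [← hip_innerSL]; ring

set_option maxHeartbeats 2000000 in
/-- The family `h_a`, `√(1-2/e) ≤ |a| < 1`, is bounded in the Zygmund norm. -/
theorem ha_zygNorm_bounded (n : ℕ) (hn : 1 ≤ n) :
    ∃ M : ℝ, ∀ a : E n, Real.sqrt (1 - 2 / Real.exp 1) ≤ ‖a‖ → ‖a‖ < 1 →
      zygNorm n (ha n a) ≤ M := by
  refine ⟨((1 + Real.log 2)^2 + 1) + (4 * Real.pi^2 + 4 * (1 + Real.log 2 + Real.pi)), ?_⟩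
  intro a hlo hhi
  have ha0 : 0 ≤ ‖a‖ := norm_nonneg a
  have hA2 : ‖a‖^2 < 1 := by nlinarith
  have hpos : 0 < 1 - ‖a‖^2 := by linarith
  set c : ℝ := Real.log (2 / (1 - ‖a‖^2)) with hc
  clear_value c
  have hexp : 0 < Real.exp 1 := Real.exp_pos 1
  have he2 : (2:ℝ) ≤ Real.exp 1 := by
    have := Real.add_one_le_exp (1:ℝ); linarith
  have hsq : 1 - 2 / Real.exp 1 ≤ ‖a‖^2 := by
    have h0 : 0 ≤ 1 - 2 / Real.exp 1 := by
      rw [sub_nonneg, div_le_one hexp]; exact he2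
    calc 1 - 2/Real.exp 1 = Real.sqrt (1 - 2/Real.exp 1)^2 := (Real.sq_sqrt h0).symm
      _ ≤ ‖a‖^2 := pow_le_pow_left₀ (Real.sqrt_nonneg _) hlo 2
  have hle : 1 - ‖a‖^2 ≤ 2 / Real.exp 1 := by linarith
  have hc1 : 1 ≤ c := by
    rw [hc, Real.le_log_iff_exp_le (by positivity)]
    rw [le_div_iff₀ hpos]
    rw [le_div_iff₀ hexp] at hle
    nlinarith
  have hcp : 0 < c := lt_of_lt_of_le one_pos hc1
  have hci : c⁻¹ ≤ 1 := inv_le_one_of_one_le₀ hc1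
  have hcin : 0 < c⁻¹ := inv_pos.2 hcp
  have hpi : 2 ≤ Real.pi := by linarith [Real.pi_gt_three]
  have hlog2 : 0 ≤ Real.log 2 := Real.log_nonneg (by norm_num)
  have hGfun : ha n a = fun z => (c:ℂ)⁻¹ *
      ((hip n z a - 1) * ((1 + Complex.log (2/(1 - hip n z a)))^2 + 1)) := by
    funext z; simp only [ha, ← hc]; ring
  have hwlt : ∀ z : E n, ‖z‖ < 1 → ‖(hip n z a)‖ < 1 := by
    intro z hz
    calc ‖(hip n z a)‖ = ‖(inner ℂ a z : ℂ)‖ := by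
          rw [hip_innerSL]; simp
      _ ≤ ‖a‖ * ‖z‖ := norm_inner_le_norm a z
      _ ≤ 1 * ‖z‖ := mul_le_mul_of_nonneg_right hhi.le (norm_nonneg z)
      _ < 1 := by rw [one_mul]; exact hz
  have hre : ∀ z : E n, ‖(hip n z a)‖ < 1 → 0 < (1 - hip n z a).re := by
    intro z hz
    have h1 : (hip n z a).re ≤ ‖(hip n z a)‖ := Complex.re_le_norm _
    simp only [Complex.sub_re, Complex.one_re]
    linarith
  have hrad : ∀ z : E n, 0 < (1 - hip n z a).re →
      rad n (ha n a) z = (c:ℂ)⁻¹ *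
        (hip n z a * (Complex.log (2/(1 - hip n z a)))^2) := by
    intro z hz
    have h9 := rad_comp n a (hasDerivAt_G c hz)
    rw [hGfun]
    exact h9.trans (by ring)
  have hrad2 : ∀ z : E n, ‖z‖ < 1 →
      rad n (rad n (ha n a)) z = hip n z a * ((c:ℂ)⁻¹ *
        ((Complex.log (2/(1 - hip n z a)))^2 +
          hip n z a * (2 * Complex.log (2/(1 - hip n z a)) / (1 - hip n z a)))) := by
    intro z hz
    have hU : IsOpen {y : E n | 0 < (1 - hip n y a).re} := by
      have hcont : Continuous fun y : E n => (1 - hip n y a).re := by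
        have h1 : Continuous fun y : E n => hip n y a := by
          simp only [hip_innerSL]; exact (innerSL ℂ a).continuous
        exact Complex.continuous_re.comp (continuous_const.sub h1)
      exact isOpen_lt continuous_const hcont
    have hzU : z ∈ {y : E n | 0 < (1 - hip n y a).re} := hre z (hwlt z hz)
    have hev : rad n (ha n a) =ᶠ[nhds z]
        fun y => (c:ℂ)⁻¹ * (hip n y a * (Complex.log (2/(1 - hip n y a)))^2) :=
      Filter.eventuallyEq_of_mem (hU.mem_nhds hzU) (fun y hy => hrad y hy)
    have h9 := rad_comp n a (hasDerivAt_H c (hre z (hwlt z hz)))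
    rw [rad_congr hev]
    exact h9
  have hsup : ∀ x ∈ zygSet n (ha n a),
      x ≤ 4 * Real.pi^2 + 4 * (1 + Real.log 2 + Real.pi) := by
    rintro x ⟨z, hz, rfl⟩
    rw [uball, mem_ball_zero_iff] at hz
    rw [hrad2 z hz]
    set w := hip n z a with hw
    set L := Complex.log (2/(1-w)) with hLdef
    set r := ‖z‖ with hrdef
    have hr0 : 0 ≤ r := hrdef ▸ norm_nonneg z
    set A := ‖w‖ with hAdef
    set d := ‖(1 - w)‖ with hddef
    set Lb := ‖L‖ with hLbdef
    clear_value Lb d A r L w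
    have hA1 : A ≤ r * ‖a‖ := by
      rw [hAdef, hw, hrdef]
      calc ‖(hip n z a)‖ = ‖(inner ℂ a z : ℂ)‖ := by
            rw [hip_innerSL]; simp
        _ ≤ ‖a‖ * ‖z‖ := norm_inner_le_norm a z
        _ = ‖z‖ * ‖a‖ := mul_comm _ _
    have hA0 : 0 ≤ A := by rw [hAdef]; exact norm_nonneg _
    have hAr : A ≤ r := le_trans hA1 (mul_le_of_le_one_right hr0 hhi.le)
    have hAa : A ≤ ‖a‖ := le_trans hA1 (mul_le_of_le_one_left ha0 hz.le)
    have hA1' : A < 1 := lt_of_le_of_lt hAr hz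
    have hd1 : 1 - A ≤ d := by
      rw [hAdef, hddef]
      have h1 := norm_sub_norm_le (1:ℂ) w
      simpa using h1
    have hd0 : 0 < d := by linarith
    have hd2 : d ≤ 2 := by
      have h1 := norm_sub_le (1:ℂ) w
      simp only [norm_one] at h1
      rw [← hAdef] at h1
      rw [hddef]
      calc ‖(1 - w)‖ ≤ 1 + A := by simpa using h1
        _ ≤ 2 := by linarith
    have hrd : 1 - r^2 ≤ 2*d := by nlinarith [sq_nonneg (1-r), hAr, hd1]
    have hr1': 0 ≤ 1 - r^2 := by nlinarith [sq_nonneg (1-r), hr0, hz.le]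
    have habs2d : ‖(2/(1-w))‖ = 2/d := by
      rw [norm_div, Complex.norm_two, hddef]
    have h2d1 : 1 ≤ 2/d := by rw [le_div_iff₀ hd0]; linarith
    have hLb : Lb ≤ Real.log (2/d) + Real.pi := by
      have h1 := Complex.norm_le_abs_re_add_abs_im L
      have h2 : L.re = Real.log (2/d) := by rw [hLdef, Complex.log_re, habs2d]
      have h3 : |L.im| ≤ Real.pi := by rw [hLdef, Complex.log_im]; exact Complex.abs_arg_le_pi _
      have h4 : |L.re| = Real.log (2/d) := by rw [h2]; exact abs_of_nonneg (Real.log_nonneg h2d1)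
      rw [hLbdef]
      linarith
    have hLb0 : 0 ≤ Lb := by rw [hLbdef]; exact norm_nonneg _
    have key : (Real.log (2/d) + Real.pi)^2 ≤ Real.pi^2 * (2/d) := by
      set t := 2/d with htdef
      have ht : 1 ≤ t := h2d1
      have hs1 : 1 ≤ Real.sqrt t := by
        rw [show (1:ℝ) = Real.sqrt 1 by simp]
        exact Real.sqrt_le_sqrt ht
      have hts : Real.sqrt t ^ 2 = t := Real.sq_sqrt (by linarith)
      have hlog : Real.log t = 2 * Real.log (Real.sqrt t) := by
        conv_lhs => rw [← hts]
        rw [Real.log_pow]; push_cast; ring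
      have hls : Real.log (Real.sqrt t) ≤ Real.sqrt t - 1 :=
        Real.log_le_sub_one_of_pos (by linarith)
      have hlt0 : 0 ≤ Real.log t := Real.log_nonneg ht
      have h5 : Real.log t + Real.pi ≤ Real.pi * Real.sqrt t := by nlinarith
      calc (Real.log t + Real.pi)^2 ≤ (Real.pi * Real.sqrt t)^2 :=
            pow_le_pow_left₀ (by positivity) h5 2
        _ = Real.pi^2 * t := by rw [mul_pow, hts]
    have hlogd : Real.log (2/d) ≤ Real.log 2 + c := by
      have hda : (1 - ‖a‖^2)/2 ≤ d := by nlinarith [sq_nonneg (1-‖a‖), hd1, hAa]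
      have h6 : 2/d ≤ 4/(1-‖a‖^2) := by
        rw [div_le_div_iff₀ hd0 hpos]; linarith [hda]
      calc Real.log (2/d) ≤ Real.log (4/(1-‖a‖^2)) := Real.log_le_log (by positivity) h6
        _ = Real.log 2 + c := by
          rw [show (4:ℝ)/(1-‖a‖^2) = 2 * (2/(1-‖a‖^2)) by ring,
            Real.log_mul (by norm_num) (by positivity), hc]
    have hval : ‖(w * ((c:ℂ)⁻¹ * (L^2 + w * (2 * L / (1 - w)))))‖
        ≤ A * (c⁻¹ * (Lb^2 + A * (2 * Lb / d))) := by
      rw [norm_mul, norm_mul]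
      have hic : ‖((c:ℂ)⁻¹)‖ = c⁻¹ := by
        rw [norm_inv, Complex.norm_real, Real.norm_eq_abs, abs_of_pos hcp]
      rw [hic, ← hAdef]
      apply mul_le_mul_of_nonneg_left _ hA0
      apply mul_le_mul_of_nonneg_left _ hcin.le
      refine (norm_add_le _ _).trans ?_
      rw [norm_pow, norm_mul, norm_div, norm_mul, Complex.norm_two, ← hAdef, ← hLbdef, ← hddef]
    have hstep : (1 - r^2) * ‖(w * ((c:ℂ)⁻¹ * (L^2 + w * (2 * L / (1 - w)))))‖
        ≤ c⁻¹ * ((1-r^2)*(A*Lb^2)) + c⁻¹ * ((1-r^2)*(A^2*(2*Lb/d))) := by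
      have := mul_le_mul_of_nonneg_left hval hr1'
      calc (1 - r^2) * ‖(w * ((c:ℂ)⁻¹ * (L^2 + w * (2 * L / (1 - w)))))‖
          ≤ (1 - r^2) * (A * (c⁻¹ * (Lb^2 + A * (2 * Lb / d)))) := this
        _ = c⁻¹ * ((1-r^2)*(A*Lb^2)) + c⁻¹ * ((1-r^2)*(A^2*(2*Lb/d))) := by ring
    have hLb' : Lb ≤ Real.log 2 + c + Real.pi := by linarith
    have hLb2 : Lb^2 ≤ (Real.log (2/d) + Real.pi)^2 := pow_le_pow_left₀ hLb0 hLb 2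
    have t1 : (1-r^2)*(A*Lb^2) ≤ (2*d)*(1*(Real.log (2/d) + Real.pi)^2) := by
      apply mul_le_mul hrd _ (by positivity) (by positivity)
      apply mul_le_mul hA1'.le hLb2 (by positivity) (by norm_num)
    have t1' : (2*d)*(1*(Real.log (2/d) + Real.pi)^2) ≤ 4*Real.pi^2 := by
      calc (2*d)*(1*(Real.log (2/d) + Real.pi)^2)
          = 2*d*((Real.log (2/d) + Real.pi)^2) := by ring
        _ ≤ 2*d*(Real.pi^2*(2/d)) := by
            apply mul_le_mul_of_nonneg_left key (by positivity)
        _ = 4*Real.pi^2 := by field_simp; ring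
    have T1 : c⁻¹ * ((1-r^2)*(A*Lb^2)) ≤ 4*Real.pi^2 := by
      calc c⁻¹ * ((1-r^2)*(A*Lb^2)) ≤ 1 * ((2*d)*(1*(Real.log (2/d) + Real.pi)^2)) := by
            apply mul_le_mul hci t1 (by positivity) (by norm_num)
        _ = (2*d)*(1*(Real.log (2/d) + Real.pi)^2) := one_mul _
        _ ≤ 4*Real.pi^2 := t1'
    have t2 : (1-r^2)*(A^2*(2*Lb/d)) ≤ (2*d)*(1*(2*(Real.log 2 + c + Real.pi)/d)) := by
      apply mul_le_mul hrd _ (by positivity) (by positivity)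
      apply mul_le_mul _ _ (by positivity) (by norm_num)
      · calc A^2 ≤ 1^2 := pow_le_pow_left₀ hA0 hA1'.le 2
          _ = 1 := one_pow 2
      · gcongr
    have T2 : c⁻¹ * ((1-r^2)*(A^2*(2*Lb/d))) ≤ 4*(1 + Real.log 2 + Real.pi) := by
      have t2' : (2*d)*(1*(2*(Real.log 2 + c + Real.pi)/d)) = 4*(Real.log 2 + c + Real.pi) := by
        field_simp; ring
      have hcc : c⁻¹ * c = 1 := inv_mul_cancel₀ (ne_of_gt hcp)
      calc c⁻¹ * ((1-r^2)*(A^2*(2*Lb/d)))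
          ≤ c⁻¹ * ((2*d)*(1*(2*(Real.log 2 + c + Real.pi)/d))) := by
            apply mul_le_mul_of_nonneg_left t2 hcin.le
        _ = c⁻¹ * (4*(Real.log 2 + c + Real.pi)) := by rw [t2']
        _ = 4*(c⁻¹*Real.log 2) + 4*(c⁻¹*c) + 4*(c⁻¹*Real.pi) := by ring
        _ ≤ 4*(1 + Real.log 2 + Real.pi) := by
            rw [hcc]
            have p1 : c⁻¹*Real.log 2 ≤ Real.log 2 := mul_le_of_le_one_left hlog2 hci
            have p2 : c⁻¹*Real.pi ≤ Real.pi := mul_le_of_le_one_left Real.pi_pos.le hci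
            linarith
    calc (1 - r^2) * ‖(w * ((c:ℂ)⁻¹ * (L^2 + w * (2 * L / (1 - w)))))‖
        ≤ c⁻¹ * ((1-r^2)*(A*Lb^2)) + c⁻¹ * ((1-r^2)*(A^2*(2*Lb/d))) := hstep
      _ ≤ 4 * Real.pi^2 + 4 * (1 + Real.log 2 + Real.pi) := add_le_add T1 T2
  have hb : ‖(ha n a 0)‖ ≤ (1 + Real.log 2)^2 + 1 := by
    have h0 : hip n 0 a = 0 := by simp [hip]
    have hl2 : Complex.log 2 = ((Real.log 2 : ℝ) : ℂ) := by
      rw [show (2:ℂ) = ((2:ℝ):ℂ) by norm_num, Complex.ofReal_log (by norm_num : (0:ℝ) ≤ 2)]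
    have heq : ha n a 0 = ((-(c⁻¹ * ((1 + Real.log 2)^2 + 1)) : ℝ) : ℂ) := by
      simp only [ha, h0]
      rw [show (2:ℂ)/(1-0) = 2 by norm_num, hl2, ← hc]
      push_cast
      ring
    rw [heq, Complex.norm_real, Real.norm_eq_abs, abs_neg, abs_of_nonneg (by positivity)]
    exact mul_le_of_le_one_left (by positivity) hci
  rw [zygNorm]
  have hsSup := Real.sSup_le hsup (by positivity)
  exact add_le_add hb hsSup
end
end

section
/- Let n ≥ 1. For a ∈ ℂⁿ with √(1−2/e) ≤ |a| < 1, define f_a(z) = h_a(z) − ∫₀¹ ⟨z,a⟩·log(2/(1 − t⟨z,a⟩)) dt, where h_a(z) = (log(2/(1−|a|²)))^{−1}·(⟨z,a⟩ − 1)·[(1 + log(2/(1 − ⟨z,a⟩)))² + 1] and log is the principal branch. Then Rf_a(a) = 0 and R(Rf_a)(a) = |a|⁴/(1 − |a|²), and sup over all such a of the Zygmund norm ‖f_a‖ is finite. -/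
set_option maxHeartbeats 1000000


open MeasureTheory Metric Filter

noncomputable section

/-- The test function `f_a(z) = h_a(z) - ∫₀¹ ⟨z,a⟩ log(2/(1-t⟨z,a⟩)) dt`. -/
def fa (n : ℕ) (a : E n) (z : E n) : ℂ :=
  ha n a z - ∫ t in (0:ℝ)..1, hip n z a * Complex.log (2 / (1 - (t : ℂ) * hip n z a))

namespace FaProof

/-- the constant `L = log(2/(1-|a|²))` as a complex number -/
def La (n : ℕ) (a : E n) : ℂ := ((Real.log (2 / (1 - ‖a‖ ^ 2)) : ℝ) : ℂ)
def lg2 : ℂ := ((Real.log 2 : ℝ) : ℂ)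
def el (w : ℂ) : ℂ := lg2 - Complex.log (1 - w)
def Phi (n : ℕ) (a : E n) (w : ℂ) : ℂ :=
  (La n a)⁻¹ * (w - 1) * ((1 + el w) ^ 2 + 1) - (w * lg2 + (1 - w) * Complex.log (1 - w) + w)
def Phi1 (n : ℕ) (a : E n) (w : ℂ) : ℂ := (La n a)⁻¹ * (el w) ^ 2 - el w
def Phi2 (n : ℕ) (a : E n) (w : ℂ) : ℂ :=
  Phi1 n a w + w * ((2 * (La n a)⁻¹ * el w - 1) * (1 - w)⁻¹)

variable {n : ℕ}

lemma hip_eq_inner (z a : E n) : hip n z a = (inner ℂ a z : ℂ) := by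
  simp [hip, PiLp.inner_apply, RCLike.inner_apply, mul_comm]

lemma abs_hip_le (z a : E n) : ‖hip n z a‖ ≤ ‖a‖ * ‖z‖ := by
  rw [hip_eq_inner]; exact norm_inner_le_norm a z

lemma one_sub_re_pos {w : ℂ} (hw : ‖w‖ < 1) : 0 < ((1:ℂ) - w).re := by
  have := Complex.re_le_norm w
  simp only [Complex.sub_re, Complex.one_re]
  linarith

lemma one_sub_mem_slit {w : ℂ} (hw : ‖w‖ < 1) : (1:ℂ) - w ∈ Complex.slitPlane :=
  Complex.mem_slitPlane_iff.2 (Or.inl (one_sub_re_pos hw))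

lemma one_sub_ne {w : ℂ} (hw : ‖w‖ < 1) : (1:ℂ) - w ≠ 0 :=
  Complex.slitPlane_ne_zero (one_sub_mem_slit hw)

lemma two_div_mem_slit {ζ : ℂ} (h : 0 < ζ.re) : 2 / ζ ∈ Complex.slitPlane := by
  have hζ : ζ ≠ 0 := fun h0 => by simp [h0] at h
  refine Complex.mem_slitPlane_iff.2 (Or.inl ?_)
  have hn : 0 < Complex.normSq ζ := Complex.normSq_pos.2 hζ
  rw [div_eq_mul_inv]
  have h2 : ((2:ℂ)).re = 2 ∧ ((2:ℂ)).im = 0 := by norm_num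
  simp only [Complex.mul_re, Complex.inv_re, Complex.inv_im, h2.1, h2.2]
  have : 0 < ζ.re / Complex.normSq ζ := div_pos h hn
  rw [show (2:ℝ) * (ζ.re / Complex.normSq ζ) - 0 * (-ζ.im / Complex.normSq ζ)
      = 2 * (ζ.re / Complex.normSq ζ) by ring]
  positivity

lemma el_eq_log {w : ℂ} (hw : ‖w‖ < 1) :
    Complex.log (2 / (1 - w)) = el w := by
  have h0 := one_sub_ne hw
  have h1 : (2 : ℂ) / (1 - w) = ((2:ℝ) : ℂ) * (1 - w)⁻¹ := by push_cast; ring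
  rw [h1, Complex.log_ofReal_mul two_pos (inv_ne_zero h0),
    Complex.log_inv _ (Complex.slitPlane_arg_ne_pi (one_sub_mem_slit hw))]
  simp only [el, lg2]
  ring

lemma hasDerivAt_one_sub (w : ℂ) : HasDerivAt (fun u : ℂ => 1 - u) (-1) w := by
  simpa using (hasDerivAt_id w).const_sub 1

lemma hasDerivAt_log_one_sub {w : ℂ} (hw : ‖w‖ < 1) :
    HasDerivAt (fun u : ℂ => Complex.log (1 - u)) (-(1 - w)⁻¹) w := by
  have h := (Complex.hasDerivAt_log (one_sub_mem_slit hw)).comp w (hasDerivAt_one_sub w)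
  simpa [Function.comp_def] using h

lemma hasDerivAt_el {w : ℂ} (hw : ‖w‖ < 1) :
    HasDerivAt el ((1 - w)⁻¹) w := by
  have h := (hasDerivAt_log_one_sub hw).const_sub lg2
  rw [neg_neg] at h
  exact h

lemma hasDerivAt_Phi (a : E n) {w : ℂ} (hw : ‖w‖ < 1) :
    HasDerivAt (Phi n a) (Phi1 n a w) w := by
  have hel := hasDerivAt_el hw
  have h1 : HasDerivAt (fun u : ℂ => u - 1) 1 w := (hasDerivAt_id' w).sub_const 1
  have h2 : HasDerivAt (fun u : ℂ => (1 + el u) ^ 2 + 1)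
      ((2:ℕ) * (1 + el w) ^ 1 * (1 - w)⁻¹) w := ((hel.const_add 1).pow 2).add_const 1
  have hA : HasDerivAt (fun u : ℂ => (La n a)⁻¹ * ((u - 1) * ((1 + el u) ^ 2 + 1)))
      ((La n a)⁻¹ * (1 * ((1 + el w) ^ 2 + 1) + (w - 1) * ((2:ℕ) * (1 + el w) ^ 1 * (1 - w)⁻¹))) w :=
    (h1.mul h2).const_mul _
  have hB : HasDerivAt (fun u : ℂ => u * lg2 + (1 - u) * Complex.log (1 - u) + u)
      (1 * lg2 + ((-1) * Complex.log (1 - w) + (1 - w) * (-(1 - w)⁻¹)) + 1) w :=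
    (((hasDerivAt_id' w).mul_const lg2).add
      ((hasDerivAt_one_sub w).mul (hasDerivAt_log_one_sub hw))).add (hasDerivAt_id' w)
  have H := hA.sub hB
  have hfun : Phi n a = fun u : ℂ =>
      (La n a)⁻¹ * ((u - 1) * ((1 + el u) ^ 2 + 1)) -
        (u * lg2 + (1 - u) * Complex.log (1 - u) + u) := by
    funext u; unfold Phi; ring
  rw [hfun]
  refine H.congr_deriv (Eq.symm ?_)
  have hlw : Complex.log (1 - w) = lg2 - el w := by simp [el]
  have h0 := one_sub_ne hw
  have e1 : (w - 1) * (1 - w)⁻¹ = -1 := by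
    rw [show (w - 1) = -(1-w) by ring, neg_mul, mul_inv_cancel₀ h0]
  have e2 : (1 - w) * (1 - w)⁻¹ = 1 := mul_inv_cancel₀ h0
  rw [hlw]; unfold Phi1
  push_cast
  linear_combination (-2 * (La n a)⁻¹ * (1 + el w)) * e1 - e2

lemma hasDerivAt_Phi1 (a : E n) {w : ℂ} (hw : ‖w‖ < 1) :
    HasDerivAt (Phi1 n a) ((La n a)⁻¹ * ((2:ℕ) * el w ^ 1 * (1 - w)⁻¹) - (1 - w)⁻¹) w := by
  have hel := hasDerivAt_el hw
  exact ((hel.pow 2).const_mul _).sub hel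

lemma hasDerivAt_wPhi1 (a : E n) {w : ℂ} (hw : ‖w‖ < 1) :
    HasDerivAt (fun u => u * Phi1 n a u) (Phi2 n a w) w := by
  have H := (hasDerivAt_id' w).mul (hasDerivAt_Phi1 a hw)
  refine H.congr_deriv (Eq.symm ?_)
  unfold Phi2
  push_cast
  ring

lemma abs_mul_lt {w : ℂ} (hw : ‖w‖ < 1) {t : ℝ} (ht : t ∈ Set.uIcc (0:ℝ) 1) :
    ‖(t : ℂ) * w‖ < 1 := by
  rw [Set.uIcc_of_le zero_le_one] at ht
  rw [norm_mul, Complex.norm_real, Real.norm_eq_abs, abs_of_nonneg ht.1]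
  calc t * ‖w‖ ≤ 1 * ‖w‖ := by
        exact mul_le_mul_of_nonneg_right ht.2 (norm_nonneg w)
    _ < 1 := by simpa using hw

lemma integral_eq {w : ℂ} (hw : ‖w‖ < 1) :
    (∫ t in (0:ℝ)..1, w * Complex.log (2 / (1 - (t : ℂ) * w)))
      = w * lg2 + (1 - w) * Complex.log (1 - w) + w := by
  have key : ∀ t ∈ Set.uIcc (0:ℝ) 1,
      HasDerivAt (fun s : ℝ => (s : ℂ) * w * lg2 +
          (1 - (s : ℂ) * w) * Complex.log (1 - (s : ℂ) * w) + (s : ℂ) * w)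
        (w * Complex.log (2 / (1 - (t : ℂ) * w))) t := by
    intro t ht
    have htw := abs_mul_lt hw ht
    have hmul : HasDerivAt (fun u : ℂ => u * w) w ((t:ℂ)) := by
      simpa using (hasDerivAt_id' ((t:ℂ))).mul_const w
    have h1s : HasDerivAt (fun u : ℂ => 1 - u * w) (-w) ((t:ℂ)) := by
      simpa using hmul.const_sub 1
    have hlog : HasDerivAt (fun u : ℂ => Complex.log (1 - u * w))
        ((1 - (t:ℂ) * w)⁻¹ * (-w)) ((t:ℂ)) :=
      by simpa [Function.comp_def] using (Complex.hasDerivAt_log (one_sub_mem_slit htw)).comp ((t:ℂ)) h1s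
    have HG : HasDerivAt (fun u : ℂ => u * w * lg2 +
        (1 - u * w) * Complex.log (1 - u * w) + u * w)
        (w * lg2 + ((-w) * Complex.log (1 - (t:ℂ) * w) +
          (1 - (t:ℂ) * w) * ((1 - (t:ℂ) * w)⁻¹ * (-w))) + w) ((t:ℂ)) :=
      ((hmul.mul_const lg2).add (h1s.mul hlog)).add hmul
    have := HG.comp_ofReal
    convert this using 1
    rw [el_eq_log htw]
    have h0 := one_sub_ne htw
    unfold el
    have e : (1 - (t:ℂ) * w) * (1 - (t:ℂ) * w)⁻¹ = 1 := mul_inv_cancel₀ h0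
    linear_combination w * e
  have hcont : ContinuousOn (fun t : ℝ => w * Complex.log (2 / (1 - (t : ℂ) * w)))
      (Set.uIcc (0:ℝ) 1) := by
    intro t ht
    have htw := abs_mul_lt hw ht
    have h0 := one_sub_ne htw
    have hf : ContinuousAt (fun t : ℝ => 2 / (1 - (t:ℂ) * w)) t :=
      ContinuousAt.div continuousAt_const
        ((continuous_const.sub (Complex.continuous_ofReal.mul continuous_const)).continuousAt) h0
    exact (continuousAt_const.mul
      (hf.clog (two_div_mem_slit (one_sub_re_pos htw)))).continuousWithinAt
  have := intervalIntegral.integral_eq_sub_of_hasDerivAt key (hcont.intervalIntegrable)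
  rw [this]
  push_cast
  simp [Complex.log_one]

/-- the good open set -/
def U (n : ℕ) (a : E n) : Set (E n) := {z | ‖hip n z a‖ < 1}

lemma hip_eq_innerSL (a : E n) : (fun z => hip n z a) = fun z => (innerSL ℂ a) z := by
  funext z; rw [hip_eq_inner]; rfl

lemma U_open (a : E n) : IsOpen (U n a) := by
  have : U n a = (fun z => ‖hip n z a‖) ⁻¹' Set.Iio 1 := rfl
  rw [this]
  apply IsOpen.preimage _ isOpen_Iio
  have : (fun z : E n => ‖hip n z a‖)
      = (fun x : ℂ => ‖x‖) ∘ (fun z => (innerSL ℂ a) z) := by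
    rw [← hip_eq_innerSL]; rfl
  rw [this]
  exact continuous_norm.comp (innerSL ℂ a).continuous

lemma mem_U_of_ball {a z : E n} (haa : ‖a‖ < 1) (hz : z ∈ uball n) : z ∈ U n a := by
  have hz1 : ‖z‖ < 1 := by simpa [uball, mem_ball, dist_eq_norm] using hz
  have := abs_hip_le z a
  have h1 : ‖a‖ * ‖z‖ < 1 := by nlinarith [norm_nonneg a, norm_nonneg z]
  exact lt_of_le_of_lt this h1

lemma fa_eq_on_U {a : E n} {z : E n} (hz : z ∈ U n a) :
    fa n a z = Phi n a (hip n z a) := by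
  have hw : ‖hip n z a‖ < 1 := hz
  unfold fa ha Phi La
  rw [integral_eq hw, el_eq_log hw]

lemma rad_congr {f g : E n → ℂ} {z : E n} (h : f =ᶠ[nhds z] g) : rad n f z = rad n g z := by
  unfold rad; rw [h.fderiv_eq]

lemma rad_comp (a z : E n) {g : ℂ → ℂ} {g' : ℂ} (hg : HasDerivAt g g' (hip n z a)) :
    rad n (fun y => g (hip n y a)) z = g' * hip n z a := by
  have hlin : HasFDerivAt (fun y : E n => (innerSL ℂ a) y) (innerSL ℂ a) z :=
    (innerSL ℂ a).hasFDerivAt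
  have hg' : HasDerivAt g g' ((innerSL ℂ a) z) := by
    rwa [← congrFun (hip_eq_innerSL a) z]
  have hF : HasFDerivAt (fun y : E n => g (hip n y a)) (g' • (innerSL ℂ a : E n →L[ℂ] (ℂ))) z := by
    have := hg'.comp_hasFDerivAt z hlin
    rwa [show (g ∘ fun y : E n => (innerSL ℂ a) y) = fun y => g (hip n y a) by
      funext y; simp only [Function.comp_apply]; rw [hip_eq_inner]; rfl] at this
  unfold rad
  rw [hF.fderiv]
  have happ : ∀ j : Fin n, (g' • (innerSL ℂ a : E n →L[ℂ] (ℂ))) (EuclideanSpace.single j 1)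
      = g' * (starRingEnd ℂ) (a j) := by
    intro j
    simp [EuclideanSpace.inner_single_right]
  simp only [happ]
  rw [hip, Finset.mul_sum]
  congr 1; funext j; ring

lemma rad_fa {a z : E n} (hz : z ∈ U n a) :
    rad n (fa n a) z = Phi1 n a (hip n z a) * hip n z a := by
  have hw : ‖hip n z a‖ < 1 := hz
  have hev : fa n a =ᶠ[nhds z] (fun y => Phi n a (hip n y a)) :=
    Filter.eventuallyEq_of_mem ((U_open a).mem_nhds hz) (fun y hy => fa_eq_on_U hy)
  rw [rad_congr hev, rad_comp a z (hasDerivAt_Phi a hw)]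

lemma rad_rad_fa {a z : E n} (hz : z ∈ U n a) :
    rad n (rad n (fa n a)) z = Phi2 n a (hip n z a) * hip n z a := by
  have hw : ‖hip n z a‖ < 1 := hz
  have hev : rad n (fa n a) =ᶠ[nhds z]
      (fun y => (fun u => u * Phi1 n a u) (hip n y a)) := by
    refine Filter.eventuallyEq_of_mem ((U_open a).mem_nhds hz) (fun y hy => ?_)
    rw [rad_fa hy]; ring
  rw [rad_congr hev, rad_comp a z (hasDerivAt_wPhi1 a hw)]

lemma abs_log_le (ζ : ℂ) :
    ‖Complex.log ζ‖ ≤ |Real.log (‖ζ‖)| + Real.pi := by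
  calc ‖Complex.log ζ‖ ≤ |(Complex.log ζ).re| + |(Complex.log ζ).im| :=
        Complex.norm_le_abs_re_add_abs_im _
    _ ≤ |Real.log (‖ζ‖)| + Real.pi := by
        rw [Complex.log_re, Complex.log_im]
        exact add_le_add le_rfl (Complex.abs_arg_le_pi ζ)

lemma pos_one_sub_sq {a : E n} (hlt : ‖a‖ < 1) : 0 < 1 - ‖a‖ ^ 2 := by
  nlinarith [norm_nonneg a]

lemma L_ge_one {a : E n} (hsq : Real.sqrt (1 - 2 / Real.exp 1) ≤ ‖a‖) (hlt : ‖a‖ < 1) :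
    1 ≤ Real.log (2 / (1 - ‖a‖ ^ 2)) := by
  have he : (2:ℝ) < Real.exp 1 := by have := Real.exp_one_gt_d9; linarith
  have h0 : (0:ℝ) ≤ 1 - 2 / Real.exp 1 := by
    have h2e1 : 2 / Real.exp 1 < 1 := by rw [div_lt_one (Real.exp_pos 1)]; linarith
    linarith
  have hr2 : 1 - 2 / Real.exp 1 ≤ ‖a‖ ^ 2 := by
    have h := Real.sq_sqrt h0
    nlinarith [Real.sqrt_nonneg (1 - 2 / Real.exp 1)]
  have h1 : 0 < 1 - ‖a‖ ^ 2 := pos_one_sub_sq hlt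
  have hee : Real.exp 1 ≤ 2 / (1 - ‖a‖ ^ 2) := by
    rw [le_div_iff₀ h1]
    have hep := Real.exp_pos 1
    have : 2 / Real.exp 1 * Real.exp 1 = 2 := by field_simp
    nlinarith
  calc (1:ℝ) = Real.log (Real.exp 1) := (Real.log_exp 1).symm
    _ ≤ _ := Real.log_le_log (Real.exp_pos 1) hee

lemma La_ne {a : E n} (hsq : Real.sqrt (1 - 2 / Real.exp 1) ≤ ‖a‖) (hlt : ‖a‖ < 1) :
    La n a ≠ 0 := by
  unfold La
  rw [Complex.ofReal_ne_zero]
  have := L_ge_one hsq hlt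
  linarith

lemma hip_self (a : E n) : hip n a a = ((‖a‖ ^ 2 : ℝ) : ℂ) := by
  rw [hip_eq_inner, inner_self_eq_norm_sq_to_K]
  norm_cast

lemma self_mem_U {a : E n} (hlt : ‖a‖ < 1) : a ∈ U n a := by
  have : ‖hip n a a‖ = ‖a‖ ^ 2 := by
    rw [hip_self, Complex.norm_real, Real.norm_eq_abs, abs_of_nonneg (by positivity)]
  show ‖hip n a a‖ < 1
  rw [this]
  nlinarith [norm_nonneg a]

lemma el_at_self {a : E n} (hlt : ‖a‖ < 1) : el ((‖a‖ ^ 2 : ℝ) : ℂ) = La n a := by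
  have h1 : 0 < 1 - ‖a‖ ^ 2 := pos_one_sub_sq hlt
  unfold el La lg2
  rw [show (1 : ℂ) - ((‖a‖ ^ 2 : ℝ) : ℂ) = ((1 - ‖a‖ ^ 2 : ℝ) : ℂ) by push_cast; ring,
    ← Complex.ofReal_log h1.le, Real.log_div two_ne_zero (ne_of_gt h1)]
  push_cast
  ring

lemma part1a {a : E n} (hsq : Real.sqrt (1 - 2 / Real.exp 1) ≤ ‖a‖) (hlt : ‖a‖ < 1) :
    rad n (fa n a) a = 0 := by
  rw [rad_fa (self_mem_U hlt), hip_self]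
  have hLa := La_ne hsq hlt
  unfold Phi1
  rw [el_at_self hlt]
  have : (La n a)⁻¹ * La n a ^ 2 - La n a = 0 := by field_simp; ring
  rw [this, zero_mul]

lemma part1b {a : E n} (hsq : Real.sqrt (1 - 2 / Real.exp 1) ≤ ‖a‖) (hlt : ‖a‖ < 1) :
    rad n (rad n (fa n a)) a = ((‖a‖ ^ 4 / (1 - ‖a‖ ^ 2) : ℝ) : ℂ) := by
  have h1 : 0 < 1 - ‖a‖ ^ 2 := pos_one_sub_sq hlt
  have hLa := La_ne hsq hlt
  have h1c : (1 : ℂ) - ((‖a‖ ^ 2 : ℝ) : ℂ) ≠ 0 := by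
    rw [show (1 : ℂ) - ((‖a‖ ^ 2 : ℝ) : ℂ) = ((1 - ‖a‖ ^ 2 : ℝ) : ℂ) by push_cast; ring]
    rw [Complex.ofReal_ne_zero]
    exact ne_of_gt h1
  rw [rad_rad_fa (self_mem_U hlt), hip_self]
  unfold Phi2 Phi1
  rw [el_at_self hlt]
  have e0 : (La n a)⁻¹ * La n a ^ 2 - La n a = 0 := by field_simp; ring
  rw [e0]
  have e2 : 2 * (La n a)⁻¹ * La n a - 1 = 1 := by field_simp; ring
  rw [e2, one_mul, zero_add]
  rw [show ((‖a‖ ^ 4 / (1 - ‖a‖ ^ 2) : ℝ) : ℂ)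
      = ((‖a‖ ^ 2 : ℝ) : ℂ) ^ 2 * ((1 : ℂ) - ((‖a‖ ^ 2 : ℝ) : ℂ))⁻¹ by
    rw [show (1 : ℂ) - ((‖a‖ ^ 2 : ℝ) : ℂ) = ((1 - ‖a‖ ^ 2 : ℝ) : ℂ) by push_cast; ring]
    rw [← Complex.ofReal_pow, ← Complex.ofReal_inv, ← Complex.ofReal_mul]
    norm_cast
    field_simp]
  ring

lemma abs_one_sub_lo {w : ℂ} : 1 - ‖w‖ ≤ ‖1 - w‖ := by
  have h : ‖(1 - w) + w‖ ≤ ‖1 - w‖ + ‖w‖ :=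
    norm_add_le _ _
  simp only [sub_add_cancel, norm_one] at h
  linarith

lemma abs_one_sub_hi {w : ℂ} (hw : ‖w‖ < 1) : ‖1 - w‖ ≤ 2 := by
  have h : ‖1 - w‖ ≤ ‖(1:ℂ)‖ + ‖w‖ := by
    exact norm_sub_le _ _
  simp only [norm_one] at h
  linarith

lemma log2_nonneg : (0:ℝ) ≤ Real.log 2 := Real.log_nonneg one_le_two

lemma log2_le_one : Real.log 2 ≤ 1 := by
  have := Real.log_le_sub_one_of_pos (by norm_num : (0:ℝ) < 2); linarith

lemma abs_el_le {w : ℂ} (hw : ‖w‖ < 1) :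
    ‖el w‖ ≤ Real.log (1 / (1 - ‖w‖)) + 2 * Real.log 2 + Real.pi := by
  have h1s : 0 < 1 - ‖w‖ := by linarith
  have hlo := abs_one_sub_lo (w := w)
  have hhi := abs_one_sub_hi hw
  have hpos : 0 < ‖1 - w‖ := lt_of_lt_of_le h1s hlo
  have hA : 0 ≤ Real.log (1 / (1 - ‖w‖)) := by
    apply Real.log_nonneg
    rw [le_div_iff₀ h1s]; nlinarith [norm_nonneg w]
  have hinv : Real.log (1 / (1 - ‖w‖)) = -Real.log (1 - ‖w‖) := by
    rw [one_div, Real.log_inv]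
  have h2 : |Real.log (‖1 - w‖)|
      ≤ Real.log (1 / (1 - ‖w‖)) + Real.log 2 := by
    rw [abs_le]
    constructor
    · have hlog_lo := Real.log_le_log h1s hlo
      have := log2_nonneg
      linarith
    · have := Real.log_le_log hpos hhi
      linarith
  have h3 := abs_log_le (1 - w)
  have h4 : ‖el w‖ ≤ ‖lg2‖ + ‖Complex.log (1 - w)‖ := by
    unfold el
    exact norm_sub_le _ _
  have h5 : ‖lg2‖ = Real.log 2 := by
    unfold lg2; rw [Complex.norm_real, Real.norm_eq_abs, abs_of_nonneg log2_nonneg]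
  linarith

lemma mul_log_le {u : ℝ} (hu : 0 < u) (hu1 : u ≤ 1) : u * Real.log (1 / u) ≤ 2 := by
  have hs : 0 < Real.sqrt u := Real.sqrt_pos.2 hu
  have hs1 : Real.sqrt u ≤ 1 := by
    rw [show (1:ℝ) = Real.sqrt 1 by simp]
    exact Real.sqrt_le_sqrt hu1
  have hlogu : Real.log u = 2 * Real.log (Real.sqrt u) := by
    conv_lhs => rw [← Real.sq_sqrt hu.le]
    rw [sq, Real.log_mul hs.ne' hs.ne']; ring
  have h1 : Real.log (1 / u) = 2 * Real.log (1 / Real.sqrt u) := by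
    rw [one_div, one_div, Real.log_inv, Real.log_inv, hlogu]; ring
  have h2 : Real.log (1 / Real.sqrt u) ≤ 1 / Real.sqrt u :=
    le_trans (Real.log_le_sub_one_of_pos (by positivity)) (by linarith)
  have h3 : u / Real.sqrt u = Real.sqrt u := by
    rw [eq_comm, eq_div_iff hs.ne', ← sq, Real.sq_sqrt hu.le]
  calc u * Real.log (1 / u) = 2 * (u * Real.log (1 / Real.sqrt u)) := by rw [h1]; ring
    _ ≤ 2 * (u * (1 / Real.sqrt u)) := by nlinarith [mul_le_mul_of_nonneg_left h2 hu.le]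
    _ = 2 * Real.sqrt u := by rw [mul_one_div, h3]
    _ ≤ 2 := by linarith

lemma point_bound {a z : E n} (hsq : Real.sqrt (1 - 2 / Real.exp 1) ≤ ‖a‖) (hlt : ‖a‖ < 1)
    (hz : z ∈ uball n) :
    (1 - ‖z‖ ^ 2) * ‖rad n (rad n (fa n a)) z‖ ≤ 158 := by
  have hz1 : ‖z‖ < 1 := by simpa [uball, mem_ball, dist_eq_norm] using hz
  have hzU : z ∈ U n a := mem_U_of_ball hlt hz
  have hw : ‖hip n z a‖ < 1 := hzU
  have hs0 : 0 ≤ ‖hip n z a‖ := norm_nonneg _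
  have h1s : 0 < 1 - ‖hip n z a‖ := by linarith
  have hsr : ‖hip n z a‖ ≤ ‖a‖ := by
    have := abs_hip_le z a
    nlinarith [norm_nonneg a, norm_nonneg z]
  have hsz : ‖hip n z a‖ ≤ ‖z‖ := by
    have := abs_hip_le z a
    nlinarith [norm_nonneg a, norm_nonneg z]
  have hL1 : 1 ≤ Real.log (2 / (1 - ‖a‖ ^ 2)) := L_ge_one hsq hlt
  have hLinv0 : 0 ≤ (Real.log (2 / (1 - ‖a‖ ^ 2)))⁻¹ := by positivity
  have hLinv1 : (Real.log (2 / (1 - ‖a‖ ^ 2)))⁻¹ ≤ 1 := by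
    rw [inv_le_one_iff₀]; right; exact hL1
  have habsLa : ‖(La n a)⁻¹‖ = (Real.log (2 / (1 - ‖a‖ ^ 2)))⁻¹ := by
    unfold La; rw [norm_inv, Complex.norm_real, Real.norm_eq_abs, abs_of_nonneg (by linarith)]
  have hΛ0 : 0 ≤ Real.log (1 / (1 - ‖hip n z a‖)) + 2 * Real.log 2 + Real.pi := by
    have hA : 0 ≤ Real.log (1 / (1 - ‖hip n z a‖)) := by
      apply Real.log_nonneg; rw [le_div_iff₀ h1s]; linarith
    have := log2_nonneg
    linarith [Real.pi_pos]
  have h_el := abs_el_le hw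
  -- log(1/(1-s)) ≤ L
  have hr1sq : 0 < 1 - ‖a‖ ^ 2 := pos_one_sub_sq hlt
  have hlogL : Real.log (1 / (1 - ‖hip n z a‖)) ≤ Real.log (2 / (1 - ‖a‖ ^ 2)) := by
    apply Real.log_le_log (by positivity)
    rw [div_le_div_iff₀ h1s hr1sq]
    nlinarith [norm_nonneg a]
  -- L⁻¹ Λ ≤ 7
  have hLL : (Real.log (2 / (1 - ‖a‖ ^ 2)))⁻¹ * Real.log (2 / (1 - ‖a‖ ^ 2)) = 1 :=
    inv_mul_cancel₀ (by linarith)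
  have hLΛ7 : (Real.log (2 / (1 - ‖a‖ ^ 2)))⁻¹ *
      (Real.log (1 / (1 - ‖hip n z a‖)) + 2 * Real.log 2 + Real.pi) ≤ 7 := by
    have hX : 0 ≤ 2 * Real.log 2 + Real.pi := by
      have := log2_nonneg; linarith [Real.pi_pos]
    have step1 : (Real.log (2 / (1 - ‖a‖ ^ 2)))⁻¹ *
        (Real.log (1 / (1 - ‖hip n z a‖)) + 2 * Real.log 2 + Real.pi)
        ≤ (Real.log (2 / (1 - ‖a‖ ^ 2)))⁻¹ *
        (Real.log (2 / (1 - ‖a‖ ^ 2)) + (2 * Real.log 2 + Real.pi)) :=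
      mul_le_mul_of_nonneg_left (by linarith) hLinv0
    have step2 : (Real.log (2 / (1 - ‖a‖ ^ 2)))⁻¹ * (2 * Real.log 2 + Real.pi)
        ≤ 2 * Real.log 2 + Real.pi := by
      nlinarith [mul_nonneg (sub_nonneg.2 hLinv1) hX]
    have := log2_le_one
    have := Real.pi_le_four
    nlinarith [step1, step2, hLL]
  -- (1-s) Λ ≤ 8
  have hsΛ8 : (1 - ‖hip n z a‖) *
      (Real.log (1 / (1 - ‖hip n z a‖)) + 2 * Real.log 2 + Real.pi) ≤ 8 := by
    have h2 := mul_log_le h1s (by linarith)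
    have h6 : (1 - ‖hip n z a‖) * (2 * Real.log 2 + Real.pi) ≤ 6 := by
      have := log2_le_one
      have := Real.pi_le_four
      have := log2_nonneg
      nlinarith [Real.pi_pos]
    nlinarith
  -- abs Phi1 ≤ 8 Λ
  have hPhi1 : ‖Phi1 n a (hip n z a)‖ ≤
      8 * (Real.log (1 / (1 - ‖hip n z a‖)) + 2 * Real.log 2 + Real.pi) := by
    have t1 : ‖Phi1 n a (hip n z a)‖ ≤
        (Real.log (2 / (1 - ‖a‖ ^ 2)))⁻¹ * (‖el (hip n z a)‖) ^ 2
          + ‖el (hip n z a)‖ := by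
      unfold Phi1
      calc ‖(La n a)⁻¹ * el (hip n z a) ^ 2 - el (hip n z a)‖
          ≤ ‖(La n a)⁻¹ * el (hip n z a) ^ 2‖ + ‖el (hip n z a)‖ := by
            exact norm_sub_le _ _
        _ = (Real.log (2 / (1 - ‖a‖ ^ 2)))⁻¹ * (‖el (hip n z a)‖) ^ 2
              + ‖el (hip n z a)‖ := by
            rw [norm_mul, norm_pow, habsLa]
    have he0 : 0 ≤ ‖el (hip n z a)‖ := norm_nonneg _
    nlinarith [mul_le_mul_of_nonneg_left (mul_le_mul h_el h_el he0 hΛ0) hLinv0, hLΛ7, hΛ0, h_el]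
  -- abs(2 La⁻¹ el - 1) ≤ 15
  have habs2 : ‖2 * (La n a)⁻¹ * el (hip n z a) - 1‖ ≤ 15 := by
    have t1 : ‖2 * (La n a)⁻¹ * el (hip n z a) - 1‖
        ≤ 2 * ((Real.log (2 / (1 - ‖a‖ ^ 2)))⁻¹ * ‖el (hip n z a)‖) + 1 := by
      calc ‖2 * (La n a)⁻¹ * el (hip n z a) - 1‖
          ≤ ‖2 * (La n a)⁻¹ * el (hip n z a)‖ + ‖(1:ℂ)‖ := by
            exact norm_sub_le _ _
        _ = 2 * ((Real.log (2 / (1 - ‖a‖ ^ 2)))⁻¹ * ‖el (hip n z a)‖) + 1 := by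
            rw [norm_mul, norm_mul, habsLa, norm_one]
            norm_num
            ring
    linarith [t1, mul_le_mul_of_nonneg_left h_el hLinv0, hLΛ7]
  have habsinv : ‖(1 - hip n z a)⁻¹‖ ≤ (1 - ‖hip n z a‖)⁻¹ := by
    rw [norm_inv]
    exact inv_anti₀ h1s abs_one_sub_lo
  -- abs Phi2 ≤ 8Λ + 15 (1-s)⁻¹
  have hPhi2 : ‖Phi2 n a (hip n z a)‖ ≤
      8 * (Real.log (1 / (1 - ‖hip n z a‖)) + 2 * Real.log 2 + Real.pi)
        + 15 * (1 - ‖hip n z a‖)⁻¹ := by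
    have t1 : ‖Phi2 n a (hip n z a)‖ ≤ ‖Phi1 n a (hip n z a)‖ +
        ‖hip n z a‖ * (‖2 * (La n a)⁻¹ * el (hip n z a) - 1‖ *
          ‖(1 - hip n z a)⁻¹‖) := by
      unfold Phi2
      calc ‖Phi1 n a (hip n z a) + hip n z a *
            ((2 * (La n a)⁻¹ * el (hip n z a) - 1) * (1 - hip n z a)⁻¹)‖
          ≤ ‖Phi1 n a (hip n z a)‖ + ‖hip n z a *
            ((2 * (La n a)⁻¹ * el (hip n z a) - 1) * (1 - hip n z a)⁻¹)‖ := by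
            exact norm_add_le _ _
        _ = _ := by rw [norm_mul, norm_mul]
    have hinv0 : 0 ≤ (1 - ‖hip n z a‖)⁻¹ := by positivity
    have hB : ‖hip n z a‖ * (‖2 * (La n a)⁻¹ * el (hip n z a) - 1‖ *
        ‖(1 - hip n z a)⁻¹‖) ≤ 15 * (1 - ‖hip n z a‖)⁻¹ := by
      have hb1 : ‖2 * (La n a)⁻¹ * el (hip n z a) - 1‖ *
          ‖(1 - hip n z a)⁻¹‖ ≤ 15 * (1 - ‖hip n z a‖)⁻¹ :=
        mul_le_mul habs2 habsinv (norm_nonneg _) (by norm_num)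
      calc ‖hip n z a‖ * (‖2 * (La n a)⁻¹ * el (hip n z a) - 1‖ *
            ‖(1 - hip n z a)⁻¹‖)
          ≤ 1 * (15 * (1 - ‖hip n z a‖)⁻¹) := by
            apply mul_le_mul hw.le hb1 (by positivity) (by norm_num)
        _ = 15 * (1 - ‖hip n z a‖)⁻¹ := by ring
    linarith
  -- assemble
  rw [rad_rad_fa hzU, norm_mul]
  have h2s : 1 - ‖z‖ ^ 2 ≤ 2 * (1 - ‖hip n z a‖) := by
    nlinarith [norm_nonneg z]
  have hz0 : 0 ≤ 1 - ‖z‖ ^ 2 := by nlinarith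
  have hstep1 : ‖Phi2 n a (hip n z a)‖ * ‖hip n z a‖
      ≤ 8 * (Real.log (1 / (1 - ‖hip n z a‖)) + 2 * Real.log 2 + Real.pi)
        + 15 * (1 - ‖hip n z a‖)⁻¹ := by
    have := norm_nonneg (Phi2 n a (hip n z a))
    nlinarith [hPhi2, hw.le, hs0]
  have hinv0 : 0 ≤ (1 - ‖hip n z a‖)⁻¹ := by positivity
  have hcancel : (1 - ‖hip n z a‖) * (1 - ‖hip n z a‖)⁻¹ = 1 :=
    mul_inv_cancel₀ (ne_of_gt h1s)
  calc (1 - ‖z‖ ^ 2) * (‖Phi2 n a (hip n z a)‖ * ‖hip n z a‖)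
      ≤ (2 * (1 - ‖hip n z a‖)) *
        (8 * (Real.log (1 / (1 - ‖hip n z a‖)) + 2 * Real.log 2 + Real.pi)
          + 15 * (1 - ‖hip n z a‖)⁻¹) := by
        apply mul_le_mul h2s hstep1
          (mul_nonneg (norm_nonneg _) (norm_nonneg _)) (by linarith)
    _ = 16 * ((1 - ‖hip n z a‖) *
          (Real.log (1 / (1 - ‖hip n z a‖)) + 2 * Real.log 2 + Real.pi))
        + 30 * ((1 - ‖hip n z a‖) * (1 - ‖hip n z a‖)⁻¹) := by ring
    _ ≤ 16 * 8 + 30 * 1 := by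
        rw [hcancel]
        nlinarith [hsΛ8]
    _ ≤ 158 := by norm_num

lemma fa_zero_bound {a : E n} (hsq : Real.sqrt (1 - 2 / Real.exp 1) ≤ ‖a‖) (hlt : ‖a‖ < 1) :
    ‖fa n a 0‖ ≤ 5 := by
  have h0U : (0 : E n) ∈ U n a := by
    show ‖hip n (0 : E n) a‖ < 1
    simp [hip]
  have hip0 : hip n (0 : E n) a = 0 := by simp [hip]
  rw [fa_eq_on_U h0U, hip0]
  have hPhi0 : Phi n a 0 = -((La n a)⁻¹ * ((1 + lg2) ^ 2 + 1)) := by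
    unfold Phi el
    simp [Complex.log_one]
    try ring
  rw [hPhi0]
  have hL1 : 1 ≤ Real.log (2 / (1 - ‖a‖ ^ 2)) := L_ge_one hsq hlt
  have habsLa : ‖(La n a)⁻¹‖ = (Real.log (2 / (1 - ‖a‖ ^ 2)))⁻¹ := by
    unfold La; rw [norm_inv, Complex.norm_real, Real.norm_eq_abs, abs_of_nonneg (by linarith)]
  have hLinv1 : (Real.log (2 / (1 - ‖a‖ ^ 2)))⁻¹ ≤ 1 := by
    rw [inv_le_one_iff₀]; right; exact hL1
  have hLinv0 : 0 ≤ (Real.log (2 / (1 - ‖a‖ ^ 2)))⁻¹ := by positivity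
  have hreal : ((1:ℂ) + lg2) ^ 2 + 1 = (((1 + Real.log 2) ^ 2 + 1 : ℝ) : ℂ) := by
    unfold lg2; push_cast; ring
  rw [norm_neg, norm_mul, habsLa, hreal, Complex.norm_real, Real.norm_eq_abs]
  have h1 : |(1 + Real.log 2) ^ 2 + 1| ≤ 5 := by
    rw [abs_of_nonneg (by positivity)]
    nlinarith [log2_le_one, log2_nonneg]
  nlinarith

end FaProof

open FaProof

/-- For `√(1-2/e) ≤ |a| < 1`: `Rf_a(a) = 0`, `RRf_a(a) = |a|⁴/(1-|a|²)`, and the family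
`f_a` is bounded in the Zygmund norm. -/
theorem fa_properties (n : ℕ) (hn : 1 ≤ n) :
    (∀ a : E n, Real.sqrt (1 - 2 / Real.exp 1) ≤ ‖a‖ → ‖a‖ < 1 →
      rad n (fa n a) a = 0 ∧
      rad n (rad n (fa n a)) a = ((‖a‖ ^ 4 / (1 - ‖a‖ ^ 2) : ℝ) : ℂ)) ∧
    ∃ M : ℝ, ∀ a : E n, Real.sqrt (1 - 2 / Real.exp 1) ≤ ‖a‖ → ‖a‖ < 1 →
      zygNorm n (fa n a) ≤ M := by
  constructor
  · intro a hsq hlt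
    exact ⟨part1a hsq hlt, part1b hsq hlt⟩
  · refine ⟨200, fun a hsq hlt => ?_⟩
    have hfa0 := fa_zero_bound hsq hlt
    have hsup : sSup (zygSet n (fa n a)) ≤ 158 := by
      apply Real.sSup_le _ (by norm_num)
      rintro x ⟨z, hz, rfl⟩
      exact point_bound hsq hlt hz
    unfold zygNorm
    linarith
end
end
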